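/- Two sequences of predense-below-p partitions are equivalent below p if and only if their associated generic functions agree for every generic filter containing p: for sequences D⃗ = ⟨(D₀ⁱ,D₁ⁱ) : i ∈ a⟩ and E⃗ = ⟨(E₀ⁱ,E₁ⁱ) : i ∈ a⟩ of predense ≤ p partitions, D⃗ and E⃗ are equivalent ≤ p iff for every generic filter G ∋ p, the functions f_D⃗^G and f_E⃗^G from a to 2 are equal, where f(i) = 0 ↔ G ∩ D₀ⁱ ≠ ∅. -/
import Mathlib


variable {P : Type*} [Preorder P]

/-- q meets D if q extends an element of D. -/
def Meets (q : P) (D : Set P) : Prop := ∃ r ∈ D, q ≤ r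

/-- Compatibility: a common lower bound exists. -/
def Compat (p q : P) : Prop := ∃ r : P, r ≤ p ∧ r ≤ q

/-- D is dense below p. -/
def DenseBelow (D : Set P) (p : P) : Prop := ∀ q ≤ p, ∃ r ≤ q, r ∈ D

/-- D is predense below p. -/
def PredenseBelow (D : Set P) (p : P) : Prop := ∀ q ≤ p, ∃ r ∈ D, Compat q r

/-- G is a generic filter: upward closed, directed, and meeting every dense class. -/
def IsGeneric (G : Set P) : Prop :=
  (∀ p ∈ G, ∀ q, p ≤ q → q ∈ G) ∧
  (∀ p ∈ G, ∀ q ∈ G, ∃ r ∈ G, r ≤ p ∧ r ≤ q) ∧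
  (∀ D : Set P, (∀ p : P, ∃ q ∈ D, q ≤ p) → (G ∩ D).Nonempty)

-- helpers to insert
lemma meets_mono {q r : P} {D : Set P} (h : r ≤ q) (hq : Meets q D) : Meets r D :=
  let ⟨x, hx, hqx⟩ := hq; ⟨x, hx, h.trans hqx⟩

lemma generic_meets_denseBelow {G : Set P} (hG : IsGeneric G) {p : P} (hp : p ∈ G)
    {S : Set P} (hS : DenseBelow S p) : ∃ q ∈ G, q ∈ S ∧ q ≤ p := by
  obtain ⟨hup, hdir, hdense⟩ := hG
  obtain ⟨q, hqG, hq⟩ := hdense {q | (q ∈ S ∧ q ≤ p) ∨ ¬ Compat q p} (by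
    intro r
    by_cases hc : Compat r p
    · obtain ⟨s, hsr, hsp⟩ := hc
      obtain ⟨t, hts, htS⟩ := hS s hsp
      exact ⟨t, Or.inl ⟨htS, hts.trans hsp⟩, hts.trans hsr⟩
    · exact ⟨r, Or.inr hc, le_refl r⟩)
  rcases hq with ⟨hqS, hqp⟩ | hnc
  · exact ⟨q, hqG, hqS, hqp⟩
  · obtain ⟨r, hrG, hrq, hrp⟩ := hdir q hqG p hp
    exact absurd ⟨r, hrq, hrp⟩ hnc

lemma refine_meets {D₀ D₁ : Set P} {p q : P} (h : PredenseBelow (D₀ ∪ D₁) p) (hq : q ≤ p) :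
    ∃ r ≤ q, Meets r D₀ ∨ Meets r D₁ := by
  obtain ⟨x, hx, s, hsq, hsx⟩ := h q hq
  rcases hx with hx | hx
  · exact ⟨s, hsq, Or.inl ⟨x, hx, hsx⟩⟩
  · exact ⟨s, hsq, Or.inr ⟨x, hx, hsx⟩⟩

lemma generic_nonempty_iff_meets {G : Set P} (hG : IsGeneric G) {q : P} (hq : q ∈ G)
    {D₀ D₁ : Set P} (hor : Meets q D₀ ∨ Meets q D₁)
    (hinc : ∀ x ∈ D₀, ∀ y ∈ D₁, ¬ Compat x y) :
    ((G ∩ D₀).Nonempty ↔ Meets q D₀) := by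
  obtain ⟨hup, hdir, _⟩ := hG
  constructor
  · rintro ⟨x, hxG, hxD⟩
    rcases hor with h | h
    · exact h
    · obtain ⟨y, hyD, hqy⟩ := h
      obtain ⟨s, _, hsx, hsq⟩ := hdir x hxG q hq
      exact absurd ⟨s, hsx, hsq.trans hqy⟩ (hinc x hxD y hyD)
  · rintro ⟨x, hxD, hqx⟩
    exact ⟨x, hup q hq x hqx, hxD⟩

/-- Two sequences of predense-below-p partitions are equivalent below p
iff their associated generic functions f(i) = 0 ↔ G ∩ D₀ⁱ ≠ ∅ agree for every generic
filter containing p. -/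
theorem equiv_partitions_iff_generic_functions_agree
    (p : P) {ι : Type*} (D₀ D₁ E₀ E₁ : ι → Set P)
    (hD : ∀ i, PredenseBelow (D₀ i ∪ D₁ i) p ∧
      ∀ x ∈ D₀ i, ∀ y ∈ D₁ i, ¬ Compat x y)
    (hE : ∀ i, PredenseBelow (E₀ i ∪ E₁ i) p ∧
      ∀ x ∈ E₀ i, ∀ y ∈ E₁ i, ¬ Compat x y)
    (hex : ∀ q : P, ∃ G : Set P, q ∈ G ∧ IsGeneric G) :
    (∀ i, DenseBelow {q | Meets q (D₀ i) ↔ Meets q (E₀ i)} p) ↔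
      (∀ G : Set P, IsGeneric G → p ∈ G →
        ∀ i, ((G ∩ D₀ i).Nonempty ↔ (G ∩ E₀ i).Nonempty)) := by

  constructor
  · intro hdense G hG hpG i
    have hSdense : DenseBelow {q | (Meets q (D₀ i) ↔ Meets q (E₀ i)) ∧
        (Meets q (D₀ i) ∨ Meets q (D₁ i)) ∧ (Meets q (E₀ i) ∨ Meets q (E₁ i))} p := by
      intro q hq
      obtain ⟨r₁, hr₁q, hr₁⟩ := refine_meets (hD i).1 hq
      obtain ⟨r₂, hr₂r₁, hr₂⟩ := refine_meets (hE i).1 (hr₁q.trans hq)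
      obtain ⟨r, hrr₂, hr⟩ := hdense i r₂ ((hr₂r₁.trans hr₁q).trans hq)
      refine ⟨r, hrr₂.trans (hr₂r₁.trans hr₁q), hr, ?_, ?_⟩
      · exact hr₁.imp (meets_mono (hrr₂.trans hr₂r₁)) (meets_mono (hrr₂.trans hr₂r₁))
      · exact hr₂.imp (meets_mono hrr₂) (meets_mono hrr₂)
    obtain ⟨q, hqG, ⟨hiff, horD, horE⟩, _⟩ := generic_meets_denseBelow hG hpG hSdense
    rw [generic_nonempty_iff_meets hG hqG horD (hD i).2,
        generic_nonempty_iff_meets hG hqG horE (hE i).2]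
    exact hiff
  · intro hgen i q hq
    obtain ⟨r₁, hr₁q, hr₁⟩ := refine_meets (hD i).1 hq
    obtain ⟨r, hrr₁, hr⟩ := refine_meets (hE i).1 (hr₁q.trans hq)
    have horD := hr₁.imp (meets_mono hrr₁) (meets_mono hrr₁)
    obtain ⟨G, hrG, hG⟩ := hex r
    have hpG : p ∈ G := hG.1 r hrG p ((hrr₁.trans hr₁q).trans hq)
    refine ⟨r, hrr₁.trans hr₁q, ?_⟩
    rw [Set.mem_setOf_eq, ← generic_nonempty_iff_meets hG hrG horD (hD i).2,
        ← generic_nonempty_iff_meets hG hrG hr (hE i).2]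
    exact hgen G hG hpG i
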